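/- Let μ ∈ (1,2) and n ≥ 1. The n-bit tent code is right continuous: for every x ∈ [0,1) there exists δ > 0 such that γ^n(y) = γ^n(x) for every y ∈ [0,1) with x ≤ y < x + δ. -/

import Mathlib

open Set MeasureTheory

/-- The tent map `f(x) = μx` for `x ≤ 1/2` and `μ(1-x)` for `x ≥ 1/2`. -/
noncomputable def tentMap (μ : ℝ) (x : ℝ) : ℝ :=
  if x ≤ 1/2 then μ * x else μ * (1 - x)

/-- `tentBit μ x k` is the `(k+1)`-st bit `b_{k+1}` of the tent code of `x`. -/
noncomputable def tentBit (μ x : ℝ) : ℕ → Bool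
  | 0 => if 1/2 ≤ x then true else false
  | k + 1 =>
    if (tentMap μ)^[k+1] x < 1/2 then tentBit μ x k
    else if 1/2 < (tentMap μ)^[k+1] x then !(tentBit μ x k)
    else true

/-- The tent code `γ^n(x) = b_1 ⋯ b_n`. -/
noncomputable def tentCode (μ : ℝ) (n : ℕ) (x : ℝ) : List Bool :=
  (List.range n).map (tentBit μ x)

/-- The tent language `L_n = {γ^n(x) : x ∈ [0,1)}`. -/
def tentLang (μ : ℝ) (n : ℕ) : Set (List Bool) :=
  {w | ∃ x ∈ Set.Ico (0:ℝ) 1, tentCode μ n x = w}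

/-- The segment-type `T(w) = {f^n(x) : x ∈ [0,1), γ^n(x) = w}`. -/
def segType (μ : ℝ) (n : ℕ) (w : List Bool) : Set ℝ :=
  {y | ∃ x ∈ Set.Ico (0:ℝ) 1, tentCode μ n x = w ∧ (tentMap μ)^[n] x = y}

/-- The set of segment-types `𝒯_n = {T(w) : w ∈ L_n}`. -/
def typeSet (μ : ℝ) (n : ℕ) : Set (Set ℝ) :=
  {S | ∃ w ∈ tentLang μ n, segType μ n w = S}

/-- `I_i = T(γ^i(1/2))`. -/
noncomputable def Iseg (μ : ℝ) (i : ℕ) : Set ℝ :=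
  segType μ i (tentCode μ i (1/2))

/-- `Ī_i = T(c̄_i)` where `c̄_i` is the bitwise complement of `γ^i(1/2)`. -/
noncomputable def Isegbar (μ : ℝ) (i : ℕ) : Set ℝ :=
  segType μ i ((tentCode μ i (1/2)).map (fun b => !b))

/-- The length of the interval `T(w)` (zero if `T(w)` is empty). -/
noncomputable def segLen (μ : ℝ) (n : ℕ) (w : List Bool) : ℝ :=
  (MeasureTheory.volume (segType μ n w)).toReal

theorem tent_aux (μ : ℝ) (hμ1 : 1 < μ) (x : ℝ) :
    ∀ i : ℕ, ∃ δ > (0:ℝ), ∀ y, x < y → y < x + δ →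
      (∀ k ≤ i, tentBit μ y k = tentBit μ x k) ∧
      (tentMap μ)^[i+1] y - (tentMap μ)^[i+1] x
        = (if tentBit μ x i = true then (-1:ℝ) else 1) * μ^(i+1) * (y - x) := by
  have hμ0 : (0:ℝ) < μ := by linarith
  intro i
  induction i with
  | zero =>
      rcases lt_trichotomy x (1/2) with h | h | h
      · refine ⟨1/2 - x, by linarith, fun y hxy hyd => ?_⟩
        have hy : y < 1/2 := by linarith
        have hbx : tentBit μ x 0 = false := by
          simp only [tentBit]; rw [if_neg (by linarith)]
        have hby : tentBit μ y 0 = false := by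
          simp only [tentBit]; rw [if_neg (by linarith)]
        refine ⟨fun k hk => ?_, ?_⟩
        · interval_cases k; rw [hbx, hby]
        · have e : (tentMap μ)^[0+1] = tentMap μ := by simp
          rw [e]; simp only [tentMap, hbx]
          rw [if_pos hy.le, if_pos h.le, if_neg (by simp)]
          ring
      · refine ⟨1, by norm_num, fun y hxy hyd => ?_⟩
        have hy : 1/2 < y := by linarith
        have hbx : tentBit μ x 0 = true := by
          simp only [tentBit]; rw [if_pos (le_of_eq h.symm)]
        have hby : tentBit μ y 0 = true := by
          simp only [tentBit]; rw [if_pos hy.le]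
        refine ⟨fun k hk => ?_, ?_⟩
        · interval_cases k; rw [hbx, hby]
        · have e : (tentMap μ)^[0+1] = tentMap μ := by simp
          rw [e]; simp only [tentMap, hbx]
          rw [if_neg (not_le.2 hy), if_pos (le_of_eq h), if_pos trivial]
          rw [h]; ring
      · refine ⟨1, by norm_num, fun y hxy hyd => ?_⟩
        have hy : 1/2 < y := by linarith
        have hbx : tentBit μ x 0 = true := by
          simp only [tentBit]; rw [if_pos h.le]
        have hby : tentBit μ y 0 = true := by
          simp only [tentBit]; rw [if_pos hy.le]
        refine ⟨fun k hk => ?_, ?_⟩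
        · interval_cases k; rw [hbx, hby]
        · have e : (tentMap μ)^[0+1] = tentMap μ := by simp
          rw [e]; simp only [tentMap, hbx]
          rw [if_neg (not_le.2 hy), if_neg (not_le.2 h), if_pos trivial]
          ring
  | succ i ih =>
      obtain ⟨δ, hδ, hI⟩ := ih
      have hP : (0:ℝ) < μ ^ (i+1) := pow_pos hμ0 _
      set X := (tentMap μ)^[i+1] x with hXdef
      rcases lt_trichotomy X (1/2) with h | h | h
      · -- X < 1/2
        refine ⟨min δ ((1/2 - X)/μ^(i+1)), lt_min hδ (div_pos (by linarith) hP), fun y hxy hyd => ?_⟩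
        obtain ⟨hk, hd⟩ := hI y hxy (hyd.trans_le (by simp))
        have hyx : y - x < (1/2 - X)/μ^(i+1) := by
          have := hyd.trans_le (add_le_add_right (min_le_right _ _) x); linarith
        have hsmall : μ^(i+1) * (y - x) < 1/2 - X := by
          rw [← lt_div_iff₀' hP]; exact hyx
        have hY : (tentMap μ)^[i+1] y < 1/2 := by
          rcases eq_or_ne (tentBit μ x i) true with hb | hb
          · rw [hb, if_pos rfl] at hd; nlinarith
          · rw [if_neg hb] at hd; nlinarith
        have hbx : tentBit μ x (i+1) = tentBit μ x i := by
          simp only [tentBit]; rw [if_pos h]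
        have hby : tentBit μ y (i+1) = tentBit μ y i := by
          simp only [tentBit]; rw [if_pos hY]
        have hbeq : tentBit μ y (i+1) = tentBit μ x (i+1) := by
          rw [hbx, hby]; exact hk i le_rfl
        refine ⟨fun k hkk => ?_, ?_⟩
        · rcases Nat.lt_succ_iff_lt_or_eq.mp (Nat.lt_succ_of_le hkk) with h' | h'
          · exact hk k (Nat.lt_succ_iff.mp h')
          · subst h'; exact hbeq
        · rw [Function.iterate_succ_apply' (tentMap μ) (i+1) y,
            Function.iterate_succ_apply' (tentMap μ) (i+1) x]
          simp only [tentMap]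
          rw [if_pos hY.le, if_pos h.le, hbx]
          rcases eq_or_ne (tentBit μ x i) true with hb | hb
          · rw [hb, if_pos rfl] at hd ⊢; rw [pow_succ]; nlinarith [hd]
          · rw [if_neg hb] at hd ⊢; rw [pow_succ]; nlinarith [hd]
      · -- X = 1/2
        refine ⟨δ, hδ, fun y hxy hyd => ?_⟩
        obtain ⟨hk, hd⟩ := hI y hxy hyd
        have hpos : 0 < μ^(i+1) * (y - x) := by
          apply mul_pos hP; linarith
        have hbx : tentBit μ x (i+1) = true := by
          simp only [tentBit]
          rw [if_neg (by rw [← hXdef, h]; exact lt_irrefl _),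
            if_neg (by rw [← hXdef, h]; exact lt_irrefl _)]
        rcases eq_or_ne (tentBit μ x i) true with hb | hb
        · -- slope negative: Y < 1/2, bit i of y = true
          rw [hb, if_pos rfl] at hd
          have hY : (tentMap μ)^[i+1] y < 1/2 := by nlinarith
          have hby : tentBit μ y (i+1) = true := by
            simp only [tentBit]; rw [if_pos hY]; rw [hk i le_rfl, hb]
          refine ⟨fun k hkk => ?_, ?_⟩
          · rcases Nat.lt_succ_iff_lt_or_eq.mp (Nat.lt_succ_of_le hkk) with h' | h'
            · exact hk k (Nat.lt_succ_iff.mp h')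
            · subst h'; rw [hby, hbx]
          · rw [Function.iterate_succ_apply' (tentMap μ) (i+1) y,
              Function.iterate_succ_apply' (tentMap μ) (i+1) x]
            simp only [tentMap]
            rw [if_pos hY.le, if_pos (le_of_eq h), hbx, if_pos rfl, ← hXdef]
            rw [pow_succ]; nlinarith [hd]
        · -- slope positive: Y > 1/2
          rw [if_neg hb] at hd
          have hY : 1/2 < (tentMap μ)^[i+1] y := by nlinarith
          have hby : tentBit μ y (i+1) = true := by
            simp only [tentBit]
            rw [if_neg (not_lt.2 hY.le), if_pos hY, hk i le_rfl,
              Bool.eq_false_iff.mpr hb]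
            rfl
          refine ⟨fun k hkk => ?_, ?_⟩
          · rcases Nat.lt_succ_iff_lt_or_eq.mp (Nat.lt_succ_of_le hkk) with h' | h'
            · exact hk k (Nat.lt_succ_iff.mp h')
            · subst h'; rw [hby, hbx]
          · rw [Function.iterate_succ_apply' (tentMap μ) (i+1) y,
              Function.iterate_succ_apply' (tentMap μ) (i+1) x]
            simp only [tentMap]
            rw [if_neg (not_le.2 hY), if_pos (le_of_eq h), hbx, if_pos rfl, ← hXdef]
            rw [pow_succ]; nlinarith [hd]
      · -- X > 1/2
        refine ⟨min δ ((X - 1/2)/μ^(i+1)), lt_min hδ (div_pos (by linarith) hP), fun y hxy hyd => ?_⟩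
        obtain ⟨hk, hd⟩ := hI y hxy (hyd.trans_le (by simp))
        have hyx : y - x < (X - 1/2)/μ^(i+1) := by
          have := hyd.trans_le (add_le_add_right (min_le_right _ _) x); linarith
        have hsmall : μ^(i+1) * (y - x) < X - 1/2 := by
          rw [← lt_div_iff₀' hP]; exact hyx
        have hY : 1/2 < (tentMap μ)^[i+1] y := by
          rcases eq_or_ne (tentBit μ x i) true with hb | hb
          · rw [hb, if_pos rfl] at hd; nlinarith
          · rw [if_neg hb] at hd; nlinarith
        have hbx : tentBit μ x (i+1) = !(tentBit μ x i) := by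
          simp only [tentBit]; rw [if_neg (not_lt.2 h.le), if_pos h]
        have hby : tentBit μ y (i+1) = !(tentBit μ y i) := by
          simp only [tentBit]; rw [if_neg (not_lt.2 hY.le), if_pos hY]
        have hbeq : tentBit μ y (i+1) = tentBit μ x (i+1) := by
          rw [hbx, hby, hk i le_rfl]
        refine ⟨fun k hkk => ?_, ?_⟩
        · rcases Nat.lt_succ_iff_lt_or_eq.mp (Nat.lt_succ_of_le hkk) with h' | h'
          · exact hk k (Nat.lt_succ_iff.mp h')
          · subst h'; exact hbeq
        · rw [Function.iterate_succ_apply' (tentMap μ) (i+1) y,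
            Function.iterate_succ_apply' (tentMap μ) (i+1) x]
          simp only [tentMap]
          rw [if_neg (not_le.2 hY), if_neg (not_le.2 h), hbx]
          rcases eq_or_ne (tentBit μ x i) true with hb | hb
          · rw [hb, if_pos rfl] at hd
            rw [hb]; simp only [Bool.not_true]
            rw [if_neg (by simp)]
            rw [pow_succ]; nlinarith [hd]
          · rw [if_neg hb] at hd
            rw [Bool.eq_false_iff.mpr hb]; simp only [Bool.not_false]
            rw [if_pos trivial]
            rw [pow_succ]; nlinarith [hd]

/-- right continuity of the `n`-bit tent code. -/
theorem tent_code_right_continuous (μ : ℝ) (hμ1 : 1 < μ) (hμ2 : μ < 2)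
    (n : ℕ) (hn : 1 ≤ n) (x : ℝ) (hx : x ∈ Set.Ico (0:ℝ) 1) :
    ∃ δ > (0:ℝ), ∀ y ∈ Set.Ico (0:ℝ) 1, x ≤ y → y < x + δ →
      tentCode μ n y = tentCode μ n x := by
  obtain ⟨δ, hδ, hI⟩ := tent_aux μ hμ1 x (n - 1)
  refine ⟨δ, hδ, fun y _ hxy hyd => ?_⟩
  rcases eq_or_lt_of_le hxy with rfl | hxy'
  · rfl
  · obtain ⟨hk, -⟩ := hI y hxy' hyd
    unfold tentCode
    exact List.map_congr_left fun k hk' => hk k (by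
      have := List.mem_range.mp hk'; omega)
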